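/- (Haynsworth inertia additivity) Let M be a nonsingular N×N Hermitian matrix, S a subspace of ℝ^N with orthogonal projection P_S, and suppose M|_S = P_S M P_S restricted to S is nonsingular. Then n_+(M) = n_+(M|_S) + n_+((M⁻¹)|_{S⊥}), where n_+ denotes the number of positive eigenvalues counted with multiplicity. -/

import Mathlib

open Matrix BigOperators

namespace HaynsworthAux

open Finset

variable {ι κ μ : Type*} [Fintype ι] [DecidableEq ι] [Fintype κ] [DecidableEq κ]
  [Fintype μ] [DecidableEq μ]

/-- Vectors vanishing on a set of coordinates. -/
def zeroSet (t : Set ι) : Submodule ℝ (ι → ℝ) where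
  carrier := {x | ∀ j ∈ t, x j = 0}
  add_mem' := fun ha hb j hj => by simp [ha j hj, hb j hj]
  zero_mem' := fun j hj => rfl
  smul_mem' := fun c x hx j hj => by simp [hx j hj]

noncomputable def posCard (d : ι → ℝ) : ℕ := (univ.filter fun i => 0 < d i).card

lemma quad_diag (d : ι → ℝ) (x : ι → ℝ) :
    x ⬝ᵥ (diagonal d *ᵥ x) = ∑ i, d i * x i ^ 2 := by
  simp only [dotProduct, mulVec_diagonal]
  exact Finset.sum_congr rfl fun i _ => by ring

lemma quad_pos {d : ι → ℝ} {x : ι → ℝ}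
    (hx : ∀ j, ¬ 0 < d j → x j = 0) (hx0 : x ≠ 0) :
    0 < ∑ i, d i * x i ^ 2 := by
  obtain ⟨j, hj⟩ := Function.ne_iff.1 hx0
  refine Finset.sum_pos' (fun i _ => ?_) ⟨j, Finset.mem_univ j, ?_⟩
  · by_cases h : 0 < d i
    · positivity
    · simp [hx i h]
  · have hdj : 0 < d j := by
      by_contra h
      exact hj (by simpa using hx j h)
    have hxj : x j ≠ 0 := by simpa using hj
    have : 0 < x j ^ 2 := by positivity
    positivity

lemma quad_nonpos {e : ι → ℝ} {x : ι → ℝ} (hx : ∀ j, 0 < e j → x j = 0) :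
    ∑ i, e i * x i ^ 2 ≤ 0 := by
  refine Finset.sum_nonpos fun i _ => ?_
  by_cases h : 0 < e i
  · simp [hx i h]
  · have h1 : e i ≤ 0 := le_of_not_gt h
    have h2 : (0:ℝ) ≤ x i ^ 2 := sq_nonneg _
    nlinarith

lemma single_li : LinearIndependent ℝ (fun i : ι => Pi.single i (1:ℝ)) := by
  have h := (Pi.basisFun ℝ ι).linearIndependent
  have he : ⇑(Pi.basisFun ℝ ι) = fun i : ι => Pi.single i (1:ℝ) :=
    funext fun i => Pi.basisFun_apply ℝ ι i
  rwa [he] at h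

lemma posCard_le_of_diag_congr {d : ι → ℝ} {e : κ → ℝ}
    (C : Matrix κ ι ℝ) (C' : Matrix ι κ ℝ)
    (h1 : C * C' = 1) (h2 : C' * C = 1)
    (h : diagonal d = Cᵀ * diagonal e * C) :
    posCard d ≤ posCard e := by
  classical
  -- the linear equivalence given by C
  let E : (ι → ℝ) ≃ₗ[ℝ] (κ → ℝ) :=
    LinearEquiv.ofLinear (Matrix.mulVecLin C) (Matrix.mulVecLin C')
      (by rw [← Matrix.mulVecLin_mul, h1, Matrix.mulVecLin_one])
      (by rw [← Matrix.mulVecLin_mul, h2, Matrix.mulVecLin_one])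
  have hcard : Fintype.card ι = Fintype.card κ := by
    have := E.finrank_eq
    simpa [Module.finrank_fintype_fun_eq_card] using this
  -- quadratic form identity
  have key : ∀ x : ι → ℝ, ∑ i, d i * x i ^ 2 = ∑ j, e j * (C *ᵥ x) j ^ 2 := by
    intro x
    rw [← quad_diag, ← quad_diag, h]
    calc x ⬝ᵥ ((Cᵀ * diagonal e * C) *ᵥ x)
        = x ⬝ᵥ (Cᵀ *ᵥ (diagonal e *ᵥ (C *ᵥ x))) := by
          rw [Matrix.mulVec_mulVec, Matrix.mulVec_mulVec]
      _ = (C *ᵥ x) ⬝ᵥ (diagonal e *ᵥ (C *ᵥ x)) := by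
          rw [Matrix.dotProduct_mulVec, Matrix.vecMul_transpose]
  -- the subspaces
  let v : {i : ι // 0 < d i} → (ι → ℝ) := (fun i => Pi.single i (1:ℝ)) ∘ Subtype.val
  let w : {j : κ // ¬ 0 < e j} → (κ → ℝ) := (fun j => Pi.single j (1:ℝ)) ∘ Subtype.val
  let V : Submodule ℝ (ι → ℝ) := Submodule.span ℝ (Set.range v)
  let W : Submodule ℝ (κ → ℝ) := Submodule.span ℝ (Set.range w)
  have hVrank : Module.finrank ℝ V = posCard d := by
    rw [finrank_span_eq_card (R := ℝ) (b := v)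
      (single_li.comp Subtype.val Subtype.val_injective)]
    simp [posCard, Fintype.card_subtype]
  have hWrank : Module.finrank ℝ W = (univ.filter fun j => ¬ 0 < e j).card := by
    rw [finrank_span_eq_card (R := ℝ) (b := w)
      (single_li.comp Subtype.val Subtype.val_injective)]
    simp [Fintype.card_subtype]
  have hVz : V ≤ zeroSet {j : ι | ¬ 0 < d j} := by
    rw [Submodule.span_le]
    rintro _ ⟨i, rfl⟩ j hj
    exact Pi.single_eq_of_ne (fun hji => hj (by rw [hji]; exact i.2)) 1
  have hWz : W ≤ zeroSet {j : κ | 0 < e j} := by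
    rw [Submodule.span_le]
    rintro _ ⟨i, rfl⟩ j hj
    exact Pi.single_eq_of_ne (fun hji => i.2 (by rw [← hji]; exact hj)) 1
  let U : Submodule ℝ (ι → ℝ) := W.map (E.symm : (κ → ℝ) →ₗ[ℝ] (ι → ℝ))
  have hUrank : Module.finrank ℝ U = Module.finrank ℝ W :=
    LinearEquiv.finrank_map_eq E.symm W
  have hdisj : V ⊓ U = ⊥ := by
    rw [Submodule.eq_bot_iff]
    intro x hx
    rw [Submodule.mem_inf] at hx
    obtain ⟨hxV, hxU⟩ := hx
    by_contra hx0
    have hpos : 0 < ∑ i, d i * x i ^ 2 :=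
      quad_pos (fun j hj => hVz hxV j hj) hx0
    have hCx : C *ᵥ x ∈ W := by
      obtain ⟨y, hyW, hyx⟩ := hxU
      have h' := congrArg E hyx
      rw [LinearEquiv.coe_coe, LinearEquiv.apply_symm_apply] at h'
      have hyx' : y = C *ᵥ x := by
        simpa [E, LinearEquiv.ofLinear_apply, Matrix.mulVecLin_apply] using h'
      exact hyx' ▸ hyW
    have hnonpos : ∑ j, e j * (C *ᵥ x) j ^ 2 ≤ 0 :=
      quad_nonpos (fun j hj => hWz hCx j hj)
    rw [key x] at hpos
    linarith
  have hsum := Submodule.finrank_sup_add_finrank_inf_eq V U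
  rw [hdisj] at hsum
  simp only [finrank_bot, add_zero] at hsum
  have hle : Module.finrank ℝ (V ⊔ U : Submodule ℝ (ι → ℝ)) ≤ Fintype.card ι := by
    have := Submodule.finrank_le (V ⊔ U : Submodule ℝ (ι → ℝ))
    simpa [Module.finrank_fintype_fun_eq_card] using this
  have hsplit : posCard e + (univ.filter fun j => ¬ 0 < e j).card = Fintype.card κ := by
    simpa [posCard] using Finset.card_filter_add_card_filter_not
      (s := (univ : Finset κ)) (p := fun j => 0 < e j)
  omega

lemma posCard_eq_of_diag_congr {d : ι → ℝ} {e : κ → ℝ}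
    (C : Matrix κ ι ℝ) (C' : Matrix ι κ ℝ)
    (h1 : C * C' = 1) (h2 : C' * C = 1)
    (h : diagonal d = Cᵀ * diagonal e * C) :
    posCard d = posCard e := by
  refine le_antisymm (posCard_le_of_diag_congr C C' h1 h2 h) ?_
  refine posCard_le_of_diag_congr C' C h2 h1 ?_
  have h1t : C'ᵀ * Cᵀ = 1 := by rw [← Matrix.transpose_mul, h1, Matrix.transpose_one]
  calc diagonal e = (C'ᵀ * Cᵀ) * diagonal e * (C * C') := by
        rw [h1t, h1, Matrix.one_mul, Matrix.mul_one]
    _ = C'ᵀ * (Cᵀ * diagonal e * C) * C' := by simp only [Matrix.mul_assoc]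
    _ = C'ᵀ * diagonal d * C' := by rw [← h]

/-- real congruence of symmetric matrices (with possibly different index types) -/
def Csgr (M : Matrix ι ι ℝ) (M' : Matrix κ κ ℝ) : Prop :=
  ∃ C : Matrix κ ι ℝ, ∃ C' : Matrix ι κ ℝ, C * C' = 1 ∧ C' * C = 1 ∧ M = Cᵀ * M' * C

lemma Csgr.trans {M : Matrix ι ι ℝ} {M' : Matrix κ κ ℝ} {M'' : Matrix μ μ ℝ}
    (h : Csgr M M') (h' : Csgr M' M'') : Csgr M M'' := by
  obtain ⟨C, C', h1, h2, hM⟩ := h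
  obtain ⟨D, D', h3, h4, hM'⟩ := h'
  refine ⟨D * C, C' * D', ?_, ?_, ?_⟩
  · calc D * C * (C' * D') = D * (C * C') * D' := by simp only [Matrix.mul_assoc]
      _ = 1 := by rw [h1, Matrix.mul_one, h3]
  · calc C' * D' * (D * C) = C' * (D' * D) * C := by simp only [Matrix.mul_assoc]
      _ = 1 := by rw [h4, Matrix.mul_one, h2]
  · rw [hM, hM', Matrix.transpose_mul]
    simp only [Matrix.mul_assoc]

lemma Csgr.symm {M : Matrix ι ι ℝ} {M' : Matrix κ κ ℝ}
    (h : Csgr M M') : Csgr M' M := by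
  obtain ⟨C, C', h1, h2, hM⟩ := h
  refine ⟨C', C, h2, h1, ?_⟩
  have h1t : C'ᵀ * Cᵀ = 1 := by rw [← Matrix.transpose_mul, h1, Matrix.transpose_one]
  calc M' = (C'ᵀ * Cᵀ) * M' * (C * C') := by rw [h1t, h1, Matrix.one_mul, Matrix.mul_one]
    _ = C'ᵀ * (Cᵀ * M' * C) * C' := by simp only [Matrix.mul_assoc]
    _ = C'ᵀ * M * C' := by rw [← hM]

lemma spectral_real {M : Matrix ι ι ℝ} (hM : M.IsHermitian) :
    Csgr M (diagonal hM.eigenvalues) := by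
  set U : Matrix ι ι ℝ := (Matrix.IsHermitian.eigenvectorUnitary hM : Matrix ι ι ℝ) with hU
  have hsU : star U = Uᵀ := by
    rw [Matrix.star_eq_conjTranspose, Matrix.conjTranspose_eq_transpose_of_trivial]
  have hU1 : U * Uᵀ = 1 := by
    rw [← hsU]
    exact (Matrix.mem_unitaryGroup_iff.mp (Matrix.IsHermitian.eigenvectorUnitary hM).2)
  have hU2 : Uᵀ * U = 1 := by
    rw [← hsU]
    exact (Matrix.mem_unitaryGroup_iff'.mp (Matrix.IsHermitian.eigenvectorUnitary hM).2)
  refine ⟨Uᵀ, Uᵀᵀ, by rw [Matrix.transpose_transpose]; exact hU2,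
    by rw [Matrix.transpose_transpose]; exact hU1, ?_⟩
  rw [Matrix.transpose_transpose]
  have hst := hM.spectral_theorem
  rw [Unitary.conjStarAlgAut_apply, ← hU, hsU] at hst
  simp only [RCLike.ofReal_real_eq_id, Function.id_comp] at hst
  exact hst

lemma csgr_inv {S : Matrix ι ι ℝ} (hSt : Sᵀ = S) (hdet : IsUnit S.det) :
    Csgr S⁻¹ S := by
  refine ⟨S⁻¹, S, Matrix.nonsing_inv_mul S hdet, Matrix.mul_nonsing_inv S hdet, ?_⟩
  have hit : S⁻¹ᵀ = S⁻¹ := by rw [Matrix.transpose_nonsing_inv, hSt]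
  rw [hit]
  calc S⁻¹ = S⁻¹ * (S * S⁻¹) := by rw [Matrix.mul_nonsing_inv S hdet, Matrix.mul_one]
    _ = S⁻¹ * S * S⁻¹ := by rw [Matrix.mul_assoc]

lemma csgr_blockdiag {A : Matrix ι ι ℝ} {S : Matrix κ κ ℝ} {a : ι → ℝ} {s : κ → ℝ}
    (hA : Csgr A (diagonal a)) (hS : Csgr S (diagonal s)) :
    Csgr (fromBlocks A 0 0 S) (diagonal (Sum.elim a s)) := by
  obtain ⟨C, C', h1, h2, hAe⟩ := hA
  obtain ⟨D, D', h3, h4, hSe⟩ := hS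
  refine ⟨fromBlocks C 0 0 D, fromBlocks C' 0 0 D', ?_, ?_, ?_⟩
  · rw [Matrix.fromBlocks_multiply]
    simp [h1, h3, Matrix.fromBlocks_one]
  · rw [Matrix.fromBlocks_multiply]
    simp [h2, h4, Matrix.fromBlocks_one]
  · rw [← Matrix.fromBlocks_diagonal, Matrix.fromBlocks_transpose,
      Matrix.fromBlocks_multiply, Matrix.fromBlocks_multiply]
    simp only [Matrix.transpose_zero, Matrix.mul_zero, Matrix.zero_mul,
      add_zero, zero_add, ← hAe, ← hSe]

lemma posCard_eigen {M : Matrix ι ι ℝ} (hM : M.IsHermitian) {d : κ → ℝ}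
    (h : Csgr M (diagonal d)) : posCard hM.eigenvalues = posCard d := by
  obtain ⟨C, C', h1, h2, hMe⟩ := (spectral_real hM).symm.trans h
  exact posCard_eq_of_diag_congr C C' h1 h2 hMe

lemma posCard_sumElim (a : ι → ℝ) (b : κ → ℝ) :
    posCard (Sum.elim a b) = posCard a + posCard b := by
  classical
  rw [posCard, posCard, posCard, Finset.card_filter, Finset.card_filter,
    Finset.card_filter, Fintype.sum_sum_type]
  simp
  simp only [Finset.card_filter]
  congr 1 <;> refine Finset.sum_congr rfl fun i _ => ?_ <;> split_ifs <;> rfl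

end HaynsworthAux

open HaynsworthAux

/-- Haynsworth inertia additivity: for a nonsingular symmetric `N×N` matrix `M` and a subspace
`S` (given as the column span of a matrix `X` with orthonormal columns, with `X'` an orthonormal
basis of `S⊥`), if the compression `M|_S ≅ Xᵀ M X` is nonsingular, then
`n₊(M) = n₊(M|_S) + n₊((M⁻¹)|_{S⊥})`. -/
theorem haynsworth_inertia
    (N k l : ℕ) (hkl : k + l = N)
    (M : Matrix (Fin N) (Fin N) ℝ) (hM : M.IsHermitian) (hMinv : IsUnit M.det)
    (X : Matrix (Fin N) (Fin k) ℝ) (X' : Matrix (Fin N) (Fin l) ℝ)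
    (hX : Xᵀ * X = 1) (hX' : X'ᵀ * X' = 1) (hperp : Xᵀ * X' = 0)
    (hS : (Xᵀ * M * X).IsHermitian) (hSinv : IsUnit (Xᵀ * M * X).det)
    (hSc : (X'ᵀ * M⁻¹ * X').IsHermitian) :
    (Finset.univ.filter fun i => 0 < hM.eigenvalues i).card
      = (Finset.univ.filter fun i => 0 < hS.eigenvalues i).card
        + (Finset.univ.filter fun i => 0 < hSc.eigenvalues i).card := by
  classical
  have hMt : Mᵀ = M := by
    rw [← Matrix.conjTranspose_eq_transpose_of_trivial]; exact hM
  set A := Xᵀ * M * X with hAdef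
  set B := Xᵀ * M * X' with hBdef
  set D := X'ᵀ * M * X' with hDdef
  have hAt : Aᵀ = A := by
    rw [← Matrix.conjTranspose_eq_transpose_of_trivial]; exact hS
  have hBt : X'ᵀ * M * X = Bᵀ := by
    simp only [hBdef, Matrix.transpose_mul, Matrix.transpose_transpose, hMt,
      Matrix.mul_assoc]
  have hDt : Dᵀ = D := by
    simp only [hDdef, Matrix.transpose_mul, Matrix.transpose_transpose, hMt,
      Matrix.mul_assoc]
  have hAinv : A * A⁻¹ = 1 := Matrix.mul_nonsing_inv A hSinv
  have hAinv' : A⁻¹ * A = 1 := Matrix.nonsing_inv_mul A hSinv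
  have hAit : A⁻¹ᵀ = A⁻¹ := by rw [Matrix.transpose_nonsing_inv, hAt]
  set S := D - Bᵀ * A⁻¹ * B with hSdef
  have hSt : Sᵀ = S := by
    simp only [hSdef, hBdef, hDdef, Matrix.transpose_sub, Matrix.transpose_mul,
      Matrix.transpose_transpose, hMt, hAit, Matrix.mul_assoc]
  have hS2 : S.IsHermitian := by
    rw [Matrix.IsHermitian, Matrix.conjTranspose_eq_transpose_of_trivial]; exact hSt
  -- the orthogonal matrix Q
  set Q : Matrix (Fin N) (Fin k ⊕ Fin l) ℝ := fromCols X X' with hQdef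
  have hQt : Qᵀ = fromRows Xᵀ X'ᵀ := transpose_fromCols X X'
  have hperp' : X'ᵀ * X = 0 := by
    have := congrArg Matrix.transpose hperp
    rwa [Matrix.transpose_mul, Matrix.transpose_transpose, Matrix.transpose_zero] at this
  have hQtQ : Qᵀ * Q = 1 := by
    rw [hQt, hQdef, fromRows_mul_fromCols, hX, hX', hperp, hperp', Matrix.fromBlocks_one]
  have hQQt : Q * Qᵀ = 1 := by
    rw [hQt, hQdef]
    exact (fromCols_mul_fromRows_eq_one_comm
      ((finCongr hkl).symm.trans finSumFinEquiv.symm) X X' Xᵀ X'ᵀ).mpr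
      (by rw [← hQt, ← hQdef, hQtQ])
  have hMM : M * M⁻¹ = 1 := Matrix.mul_nonsing_inv M hMinv
  have hMM' : M⁻¹ * M = 1 := Matrix.nonsing_inv_mul M hMinv
  -- block forms
  have hblock : ∀ P : Matrix (Fin N) (Fin N) ℝ,
      Qᵀ * P * Q = fromBlocks (Xᵀ * P * X) (Xᵀ * P * X') (X'ᵀ * P * X) (X'ᵀ * P * X') := by
    intro P
    rw [hQt, hQdef, fromRows_mul, fromRows_mul_fromCols]
  have hM'eq : Qᵀ * M * Q = fromBlocks A B Bᵀ D := by rw [hblock M, hBt]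
  -- L and its inverse
  set L : Matrix (Fin k ⊕ Fin l) (Fin k ⊕ Fin l) ℝ := fromBlocks 1 (-(A⁻¹ * B)) 0 1 with hLdef
  set L' : Matrix (Fin k ⊕ Fin l) (Fin k ⊕ Fin l) ℝ := fromBlocks 1 (A⁻¹ * B) 0 1 with hL'def
  have hLL' : L * L' = 1 := by
    rw [hLdef, hL'def, Matrix.fromBlocks_multiply]
    simp [Matrix.fromBlocks_one]
  have hL'L : L' * L = 1 := by
    rw [hLdef, hL'def, Matrix.fromBlocks_multiply]
    simp [Matrix.fromBlocks_one]
  -- M congruent to fromBlocks A B Bᵀ D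
  have c1 : Csgr M (fromBlocks A B Bᵀ D) := by
    refine ⟨Qᵀ, Q, hQtQ, hQQt, ?_⟩
    rw [Matrix.transpose_transpose, ← hM'eq]
    calc M = (Q * Qᵀ) * M * (Q * Qᵀ) := by rw [hQQt, Matrix.one_mul, Matrix.mul_one]
      _ = Q * (Qᵀ * M * Q) * Qᵀ := by simp only [Matrix.mul_assoc]
  -- fromBlocks A B Bᵀ D congruent to fromBlocks A 0 0 S
  have c2 : Csgr (fromBlocks A B Bᵀ D) (fromBlocks A 0 0 S) := by
    refine ⟨L', L, hL'L, hLL', ?_⟩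
    have hL't : L'ᵀ = fromBlocks 1 0 (Bᵀ * A⁻¹) 1 := by
      rw [hL'def, Matrix.fromBlocks_transpose, Matrix.transpose_mul, hAit,
        Matrix.transpose_one, Matrix.transpose_zero, Matrix.transpose_one]
    have e2 : A * (A⁻¹ * B) = B := by rw [← Matrix.mul_assoc, hAinv, Matrix.one_mul]
    have e3 : Bᵀ * A⁻¹ * A = Bᵀ := by rw [Matrix.mul_assoc, hAinv', Matrix.mul_one]
    have e4 : Bᵀ * (A⁻¹ * B) + S = D := by
      rw [hSdef, ← Matrix.mul_assoc]; abel
    rw [hL't, hL'def, Matrix.fromBlocks_multiply, Matrix.fromBlocks_multiply]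
    simp only [Matrix.one_mul, Matrix.mul_one, Matrix.zero_mul, Matrix.mul_zero,
      add_zero, zero_add, e2, e3, e4]
  -- fromBlocks A 0 0 S congruent to a diagonal
  set a := hS.eigenvalues with hadef
  set s := hS2.eigenvalues with hsdef
  have c3 : Csgr (fromBlocks A 0 0 S) (diagonal (Sum.elim a s)) :=
    csgr_blockdiag (spectral_real hS) (spectral_real hS2)
  -- inverse facts & the Schur complement
  have hinvR : (fromBlocks A B Bᵀ D) * (Qᵀ * M⁻¹ * Q) = 1 := by
    rw [← hM'eq]
    calc Qᵀ * M * Q * (Qᵀ * M⁻¹ * Q) = Qᵀ * (M * (Q * Qᵀ) * M⁻¹) * Q := by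
          simp only [Matrix.mul_assoc]
      _ = 1 := by rw [hQQt, Matrix.mul_one, hMM, Matrix.mul_one, hQtQ]
  haveI hInvA : Invertible A := A.invertibleOfIsUnitDet hSinv
  have hUnitM' : IsUnit (fromBlocks A B Bᵀ D).det :=
    Matrix.isUnit_det_of_right_inverse hinvR
  have hdetS : IsUnit S.det := by
    have hd := Matrix.det_fromBlocks₁₁ A B Bᵀ D
    rw [invOf_eq_nonsing_inv A] at hd
    rw [hd, ← hSdef] at hUnitM'
    exact (IsUnit.mul_iff.mp hUnitM').2
  haveI hInvS' : Invertible (D - Bᵀ * ⅟A * B) := by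
    rw [invOf_eq_nonsing_inv A, ← hSdef]
    exact S.invertibleOfIsUnitDet hdetS
  haveI hInvM' : Invertible (fromBlocks A B Bᵀ D) :=
    (fromBlocks A B Bᵀ D).invertibleOfIsUnitDet hUnitM'
  have hScInv : X'ᵀ * M⁻¹ * X' = S⁻¹ := by
    have h1 : ⅟(fromBlocks A B Bᵀ D) = Qᵀ * M⁻¹ * Q := invOf_eq_right_inv hinvR
    have h2 := Matrix.invOf_fromBlocks₁₁_eq A B Bᵀ D
    rw [h1, hblock M⁻¹] at h2
    have h3 := congrArg Matrix.toBlocks₂₂ h2.symm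
    simp only [Matrix.toBlocks_fromBlocks₂₂] at h3
    have h4 : D - Bᵀ * ⅟A * B = S := by
      rw [invOf_eq_nonsing_inv A]
    have h5 : ⅟(D - Bᵀ * ⅟A * B) = (D - Bᵀ * ⅟A * B)⁻¹ :=
      invOf_eq_nonsing_inv (D - Bᵀ * ⅟A * B)
    rw [← h3, h5, h4]
  -- the right-hand side second term
  have c4 : Csgr (X'ᵀ * M⁻¹ * X') (diagonal s) := by
    rw [hScInv]
    exact (csgr_inv hSt hdetS).trans (spectral_real hS2)
  -- put it together
  have e1 : posCard hM.eigenvalues = posCard (Sum.elim a s) :=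
    posCard_eigen hM ((c1.trans c2).trans c3)
  have e2 : posCard hSc.eigenvalues = posCard s := posCard_eigen hSc c4
  show posCard hM.eigenvalues = posCard a + posCard (hSc.eigenvalues)
  rw [e1, e2, posCard_sumElim]
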